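/- Let F be an acyclic agreement forest for a set of trees T on the same leaf set, and let σ be any leaf ordering that lists all leaves of C_1 before all leaves of C_2, etc., following a topological ordering (C_1,...,C_k) of the inheritance graph of F. Then for every component C_i, every leaf l_j ∈ L(C_i) that is not the first leaf of C_i (under σ) satisfies OLA(T,σ)_j = OLA(T',σ)_j for all trees T, T' in the collection. -/

import Mathlib

open scoped Classical

namespace OLA

/-- Rooted binary phylogenetic trees with `ℕ`-labeled leaves. -/
inductive BTree where
  | leaf (x : ℕ)
  | node (l r : BTree)
deriving DecidableEq

namespace BTree

def leafList : BTree → List ℕ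
  | .leaf x => [x]
  | .node l r => leafList l ++ leafList r

def leafSet (t : BTree) : Finset ℕ := t.leafList.toFinset

/-- `t` is a phylogenetic tree on the leaf set `{0, …, n-1}`. -/
def IsPhylo (t : BTree) (n : ℕ) : Prop :=
  t.leafList.Nodup ∧ t.leafSet = Finset.range n

def minLeaf : BTree → ℕ
  | .leaf x => x
  | .node l r => min (minLeaf l) (minLeaf r)

/-- OLA index of the root of a (sub)tree: leaf label, or minus the second
smallest of the minimal leaves of the two children. -/
def idx : BTree → ℤ
  | .leaf x => (x : ℤ)
  | .node l r => -(max (minLeaf l) (minLeaf r) : ℤ)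

/-- Restriction `T^i` of `t` to the leaves labeled `≤ i` (suppressing
degree-2 nodes); `none` if no such leaf exists. -/
def restrictLe : BTree → ℕ → Option BTree
  | .leaf x, i => if x ≤ i then some (.leaf x) else none
  | .node l r, i =>
    match restrictLe l i, restrictLe r i with
    | some l', some r' => some (.node l' r')
    | some l', none => some l'
    | none, some r' => some r'
    | none, none => none

/-- Restriction `T|_S` of `t` to the leaves in `S` (suppressing degree-2 nodes). -/
def restrictTo : BTree → Finset ℕ → Option BTree
  | .leaf x, S => if x ∈ S then some (.leaf x) else none
  | .node l r, S =>
    match restrictTo l S, restrictTo r S with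
    | some l', some r' => some (.node l' r')
    | some l', none => some l'
    | none, some r' => some r'
    | none, none => none

/-- OLA index of the sibling of the leaf labeled `i`, if it exists. -/
def siblingIdx : BTree → ℕ → Option ℤ
  | .leaf _, _ => none
  | .node l r, i =>
    if l = .leaf i then some r.idx
    else if r = .leaf i then some l.idx
    else (siblingIdx l i).orElse (fun _ => siblingIdx r i)

/-- The OLA vector entry of `t` at position `i ≥ 1`: the index of the sibling
of leaf `i` in the restriction of `t` to leaves `0, …, i`. -/
def olaEntry (t : BTree) (i : ℕ) : ℤ :=
  ((t.restrictLe i).bind (fun t' => t'.siblingIdx i)).getD 0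

def relabel (f : ℕ → ℕ) : BTree → BTree
  | .leaf x => .leaf (f x)
  | .node l r => .node (relabel f l) (relabel f r)

/-- The set of clusters (leaf sets of rooted subtrees) of `t`.  Two leaf-labeled
trees over the same leaf set are isomorphic iff their cluster sets coincide. -/
def clusters : BTree → Set (Set ℕ)
  | .leaf x => {{x}}
  | .node l r => insert {y | y ∈ (node l r).leafList} (clusters l ∪ clusters r)

def subtreeAt : BTree → List Bool → Option BTree
  | t, [] => some t
  | .leaf _, _ :: _ => none
  | .node l _, false :: p => subtreeAt l p
  | .node _ r, true :: p => subtreeAt r p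

/-- `w` occurs as a rooted subtree (i.e. the subtree below a node) of `t`. -/
def IsNode (t w : BTree) : Prop := ∃ p, t.subtreeAt p = some w

/-- The position of the least common ancestor of the leaves in `S`. -/
def lcaPos : BTree → Finset ℕ → List Bool
  | .leaf _, _ => []
  | .node l r, S =>
    if S ⊆ l.leafSet then false :: lcaPos l S
    else if S ⊆ r.leafSet then true :: lcaPos r S
    else []

/-- Positions of the nodes of the minimal spanning subtree `T(S)`. -/
def spanNodes (t : BTree) (S : Finset ℕ) : Set (List Bool) :=
  {p | t.lcaPos S <+: p ∧ ∃ u, t.subtreeAt p = some u ∧ ∃ x ∈ S, x ∈ u.leafList}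

end BTree

/-- OLA vector of tree `t` under the leaf ordering `σ` (leaf `x` is the
`σ x`-th leaf in the order). -/
def ola (t : BTree) (σ : Equiv.Perm ℕ) (i : ℕ) : ℤ :=
  (t.relabel σ).olaEntry i

/-- `σ` is a valid leaf ordering of the leaf set `{0, …, n-1}`. -/
def IsOrdering (σ : Equiv.Perm ℕ) (n : ℕ) : Prop := ∀ x < n, σ x < n

/-- The set of (corrected) mismatched indices among `{1, …, i}` of a family of
OLA vectors: an index is mismatched if two of the vectors differ there, or if
all vectors place that leaf above the internal node created by an
already-mismatched leaf. -/
noncomputable def mismatch {ι : Type*} (v : ι → ℕ → ℤ) : ℕ → Finset ℕ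
  | 0 => ∅
  | i + 1 =>
    let M := mismatch v i
    if (∃ a b : ι, v a (i+1) ≠ v b (i+1)) ∨ (∃ j ∈ M, ∀ a : ι, v a (i+1) = -(j : ℤ))
    then insert (i+1) M else M

/-- Corrected OLA distance of a family of OLA vectors of trees on `n` leaves. -/
noncomputable def corrDist {ι : Type*} (v : ι → ℕ → ℤ) (n : ℕ) : ℕ :=
  (mismatch v (n-1)).card

/-- Hamming OLA distance: the number of indices where at least two vectors differ. -/
noncomputable def hamDist {ι : Type*} (v : ι → ℕ → ℤ) (n : ℕ) : ℕ :=
  ((Finset.Icc 1 (n-1)).filter fun i => ∃ a b : ι, v a i ≠ v b i).card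

/-- `comp` is an agreement forest for the trees `ts` over leaf set `{0,…,n-1}`:
components have pairwise disjoint leaf sets partitioning the full leaf set,
each tree restricted to a component's leaves is isomorphic to the component,
and the spanning subtrees are node-disjoint in each tree. -/
def IsAF {ι : Type*} (ts : ι → BTree) (n : ℕ) {f : ℕ} (comp : Fin f → BTree) : Prop :=
  (∀ i, (comp i).leafList.Nodup) ∧
  (∀ i j, i ≠ j → Disjoint (comp i).leafSet (comp j).leafSet) ∧
  (Finset.univ.biUnion (fun i => (comp i).leafSet) = Finset.range n) ∧
  (∀ a i, ∃ c, (ts a).restrictTo (comp i).leafSet = some c ∧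
      c.clusters = (comp i).clusters) ∧
  (∀ a i j, i ≠ j →
      Disjoint (BTree.spanNodes (ts a) ((comp i).leafSet))
               (BTree.spanNodes (ts a) ((comp j).leafSet)))

/-- Edge of the inheritance graph: some tree has a directed path from the root
of the spanning subtree of component `i` down to that of component `j`. -/
def inhEdge {ι : Type*} (ts : ι → BTree) {f : ℕ} (comp : Fin f → BTree)
    (i j : Fin f) : Prop :=
  i ≠ j ∧ ∃ a, (BTree.lcaPos (ts a) ((comp i).leafSet)) <+:
      (BTree.lcaPos (ts a) ((comp j).leafSet))

/-- `comp` is an acyclic agreement forest for `ts`. -/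
def IsAAF {ι : Type*} (ts : ι → BTree) (n : ℕ) {f : ℕ} (comp : Fin f → BTree) : Prop :=
  IsAF ts n comp ∧ ∀ i, ¬ Relation.TransGen (inhEdge ts comp) i i

/-- Size of a maximum acyclic agreement forest (an AAF with fewest components). -/
noncomputable def maafSize {ι : Type*} (ts : ι → BTree) (n : ℕ) : ℕ :=
  sInf {f | ∃ comp : Fin f → BTree, IsAAF ts n comp}

end OLA
namespace OLA
namespace BTree

lemma restrictTo_node (l r : BTree) (S : Finset ℕ) :
    (BTree.node l r).restrictTo S =
      match l.restrictTo S, r.restrictTo S with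
      | some l', some r' => some (BTree.node l' r')
      | some l', none => some l'
      | none, some r' => some r'
      | none, none => none := rfl

lemma restrictLe_node (l r : BTree) (i : ℕ) :
    (BTree.node l r).restrictLe i =
      match l.restrictLe i, r.restrictLe i with
      | some l', some r' => some (BTree.node l' r')
      | some l', none => some l'
      | none, some r' => some r'
      | none, none => none := rfl

lemma leafList_node (l r : BTree) :
    (BTree.node l r).leafList = l.leafList ++ r.leafList := rfl

lemma leafList_ne_nil : ∀ t : BTree, t.leafList ≠ []
  | .leaf x => by simp [leafList]
  | .node l r => by simp [leafList, leafList_ne_nil l]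

lemma mem_leafSet {x : ℕ} {t : BTree} : x ∈ t.leafSet ↔ x ∈ t.leafList := by
  simp [leafSet]

lemma restrictTo_eq_none {t : BTree} {S : Finset ℕ} :
    t.restrictTo S = none ↔ ∀ z ∈ t.leafList, z ∉ S := by
  induction t with
  | leaf x => by_cases h : x ∈ S <;> simp [restrictTo, leafList, h]
  | node l r ihl ihr =>
    rw [restrictTo_node]
    cases hl : l.restrictTo S <;> cases hr : r.restrictTo S
    · simp only [leafList_node, List.mem_append]
      constructor
      · rintro - z (hz | hz) hzS
        · exact ihl.1 hl z hz hzS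
        · exact ihr.1 hr z hz hzS
      · intro _; trivial
    · simp only [leafList_node, List.mem_append]
      constructor
      · rintro h; exact absurd h (by simp)
      · intro h
        have : r.restrictTo S = none := ihr.2 (fun z hz => h z (Or.inr hz))
        rw [this] at hr; exact absurd hr (by simp)
    · simp only [leafList_node, List.mem_append]
      constructor
      · rintro h; exact absurd h (by simp)
      · intro h
        have : l.restrictTo S = none := ihl.2 (fun z hz => h z (Or.inl hz))
        rw [this] at hl; exact absurd hl (by simp)
    · simp only [leafList_node, List.mem_append]
      constructor
      · rintro h; exact absurd h (by simp)
      · intro h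
        have : l.restrictTo S = none := ihl.2 (fun z hz => h z (Or.inl hz))
        rw [this] at hl; exact absurd hl (by simp)

lemma restrictTo_leafList {t : BTree} {S : Finset ℕ} {u : BTree}
    (h : t.restrictTo S = some u) : u.leafList = t.leafList.filter (· ∈ S) := by
  induction t generalizing u with
  | leaf x =>
    by_cases hx : x ∈ S
    · simp only [restrictTo, if_pos hx, Option.some.injEq] at h
      subst h; simp [leafList, hx]
    · simp [restrictTo, if_neg hx] at h
  | node l r ihl ihr =>
    rw [restrictTo_node] at h
    cases hl : l.restrictTo S <;> cases hr : r.restrictTo S <;> rw [hl, hr] at h <;>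
      simp only [Option.some.injEq] at h
    · exact absurd h (by simp)
    · subst h
      have h0 := restrictTo_eq_none.1 hl
      have hfl : l.leafList.filter (· ∈ S) = [] :=
        List.filter_eq_nil_iff.2 (fun a ha => by simp [h0 a ha])
      simp [leafList_node, List.filter_append, ihr hr, hfl]
    · subst h
      have h0 := restrictTo_eq_none.1 hr
      have hfr : r.leafList.filter (· ∈ S) = [] :=
        List.filter_eq_nil_iff.2 (fun a ha => by simp [h0 a ha])
      simp [leafList_node, List.filter_append, ihl hl, hfr]
    · subst h
      simp [leafList_node, List.filter_append, ihl hl, ihr hr]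

lemma restrictTo_isSome {t : BTree} {S : Finset ℕ} {z : ℕ}
    (hz : z ∈ t.leafList) (hzS : z ∈ S) : ∃ u, t.restrictTo S = some u := by
  cases h : t.restrictTo S with
  | none => exact absurd hzS (restrictTo_eq_none.1 h z hz)
  | some u => exact ⟨u, rfl⟩

lemma mem_restrictTo_leafList {t u : BTree} {S : Finset ℕ} {z : ℕ}
    (h : t.restrictTo S = some u) : z ∈ u.leafList ↔ z ∈ t.leafList ∧ z ∈ S := by
  simp [restrictTo_leafList h, List.mem_filter]

lemma restrictTo_congr {t : BTree} {S S' : Finset ℕ}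
    (h : ∀ z ∈ t.leafList, z ∈ S ↔ z ∈ S') : t.restrictTo S = t.restrictTo S' := by
  induction t with
  | leaf x => simp only [restrictTo]; rw [if_congr (h x (by simp [leafList])) rfl rfl]
  | node l r ihl ihr =>
    have hl := ihl (fun z hz => h z (by simp [leafList, hz]))
    have hr := ihr (fun z hz => h z (by simp [leafList, hz]))
    rw [restrictTo_node, restrictTo_node, hl, hr]

lemma restrictLe_eq_restrictTo {t : BTree} {i : ℕ} {S : Finset ℕ}
    (h : ∀ z ∈ t.leafList, z ∈ S ↔ z ≤ i) : t.restrictLe i = t.restrictTo S := by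
  induction t with
  | leaf x =>
    simp only [restrictLe, restrictTo]
    rw [if_congr (h x (by simp [leafList])).symm rfl rfl]
  | node l r ihl ihr =>
    have hl := ihl (fun z hz => h z (by simp [leafList, hz]))
    have hr := ihr (fun z hz => h z (by simp [leafList, hz]))
    rw [restrictLe_node, restrictTo_node, hl, hr]

lemma restrictTo_restrictTo {t : BTree} {S S' : Finset ℕ} (hss : S' ⊆ S) :
    (t.restrictTo S).bind (fun u => u.restrictTo S') = t.restrictTo S' := by
  induction t with
  | leaf x =>
    by_cases hx : x ∈ S
    · simp [restrictTo, hx]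
    · have : x ∉ S' := fun h => hx (hss h)
      simp [restrictTo, hx, this]
  | node l r ihl ihr =>
    rw [restrictTo_node (l := l) (S := S), restrictTo_node (l := l) (S := S'),
      ← ihl, ← ihr]
    cases hl : l.restrictTo S <;> cases hr : r.restrictTo S <;>
      simp only [Option.bind_none, Option.bind_some]
    · (cases h' : restrictTo ‹BTree› S' <;> rfl)
    all_goals (first
      | (cases h' : restrictTo ‹BTree› S' <;> simp [restrictTo_node, h'])
      | simp [restrictTo_node])

/-! ### Mirror-equivalence of trees -/

def MEquiv : BTree → BTree → Prop
  | .leaf x, .leaf y => x = y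
  | .node l r, .node l' r' => (MEquiv l l' ∧ MEquiv r r') ∨ (MEquiv l r' ∧ MEquiv r l')
  | _, _ => False

lemma mequiv_perm : ∀ {t t' : BTree}, MEquiv t t' → t.leafList.Perm t'.leafList
  | .leaf x, .leaf y, h => by cases h; rfl
  | .node l r, .node l' r', h => by
    rcases h with ⟨h1, h2⟩ | ⟨h1, h2⟩
    · exact (mequiv_perm h1).append (mequiv_perm h2)
    · exact ((mequiv_perm h1).append (mequiv_perm h2)).trans (List.perm_append_comm)

lemma mequiv_minLeaf : ∀ {t t' : BTree}, MEquiv t t' → t.minLeaf = t'.minLeaf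
  | .leaf x, .leaf y, h => h
  | .node l r, .node l' r', h => by
    rcases h with ⟨h1, h2⟩ | ⟨h1, h2⟩
    · simp [minLeaf, mequiv_minLeaf h1, mequiv_minLeaf h2]
    · simp [minLeaf, mequiv_minLeaf h1, mequiv_minLeaf h2, min_comm]

lemma mequiv_idx : ∀ {t t' : BTree}, MEquiv t t' → t.idx = t'.idx
  | .leaf x, .leaf y, h => by cases h; rfl
  | .node l r, .node l' r', h => by
    rcases h with ⟨h1, h2⟩ | ⟨h1, h2⟩
    · simp [idx, mequiv_minLeaf h1, mequiv_minLeaf h2]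
    · simp [idx, mequiv_minLeaf h1, mequiv_minLeaf h2, max_comm]

lemma mequiv_leaf_iff : ∀ {t t' : BTree}, MEquiv t t' → ∀ {i : ℕ},
    (t = .leaf i ↔ t' = .leaf i)
  | .leaf x, .leaf y, h, i => by cases h; rfl
  | .node l r, .node l' r', h, i => by simp
  | .leaf _, .node _ _, h, i => h.elim
  | .node _ _, .leaf _, h, i => h.elim

lemma mequiv_restrictTo : ∀ {t t' : BTree}, MEquiv t t' → ∀ (S : Finset ℕ),
    (t.restrictTo S = none ∧ t'.restrictTo S = none) ∨
    ∃ u u', t.restrictTo S = some u ∧ t'.restrictTo S = some u' ∧ MEquiv u u'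
  | .leaf x, .leaf y, h, S => by
    cases h
    by_cases hx : x ∈ S
    · exact Or.inr ⟨.leaf x, .leaf x, by simp [restrictTo, hx], by simp [restrictTo, hx], rfl⟩
    · exact Or.inl ⟨by simp [restrictTo, hx], by simp [restrictTo, hx]⟩
  | .node l r, .node l' r', h, S => by
    rw [restrictTo_node, restrictTo_node]
    rcases h with ⟨h1, h2⟩ | ⟨h1, h2⟩
    · rcases mequiv_restrictTo h1 S with ⟨e1, e1'⟩ | ⟨u, u', e1, e1', hu⟩ <;>
        rcases mequiv_restrictTo h2 S with ⟨e2, e2'⟩ | ⟨v, v', e2, e2', hv⟩ <;>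
        rw [e1, e1', e2, e2']
      · exact Or.inl ⟨rfl, rfl⟩
      · exact Or.inr ⟨v, v', rfl, rfl, hv⟩
      · exact Or.inr ⟨u, u', rfl, rfl, hu⟩
      · exact Or.inr ⟨.node u v, .node u' v', rfl, rfl, Or.inl ⟨hu, hv⟩⟩
    · rcases mequiv_restrictTo h1 S with ⟨e1, e1'⟩ | ⟨u, u', e1, e1', hu⟩ <;>
        rcases mequiv_restrictTo h2 S with ⟨e2, e2'⟩ | ⟨v, v', e2, e2', hv⟩ <;>
        rw [e1, e2] <;> rw [e1'] at * <;> rw [e2'] at * <;> rw [e1', e2']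
      · exact Or.inl ⟨rfl, rfl⟩
      · exact Or.inr ⟨v, v', rfl, rfl, hv⟩
      · exact Or.inr ⟨u, u', rfl, rfl, hu⟩
      · exact Or.inr ⟨.node u v, .node v' u', rfl, rfl, Or.inr ⟨hu, hv⟩⟩
  | .leaf _, .node _ _, h, _ => h.elim
  | .node _ _, .leaf _, h, _ => h.elim

lemma siblingIdx_node (l r : BTree) (i : ℕ) :
    (BTree.node l r).siblingIdx i =
      if l = .leaf i then some r.idx
      else if r = .leaf i then some l.idx
      else (siblingIdx l i).orElse (fun _ => siblingIdx r i) := rfl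

lemma siblingIdx_eq_none {t : BTree} {i : ℕ} (h : i ∉ t.leafList) :
    t.siblingIdx i = none := by
  induction t with
  | leaf x => rfl
  | node l r ihl ihr =>
    rw [leafList_node, List.mem_append] at h
    push_neg at h
    have hl : l ≠ .leaf i := by rintro rfl; simp [leafList] at h
    have hr : r ≠ .leaf i := by rintro rfl; simp [leafList] at h
    rw [siblingIdx_node, if_neg hl, if_neg hr, ihl h.1, ihr h.2]
    rfl

lemma mequiv_siblingIdx : ∀ {t t' : BTree}, MEquiv t t' → ∀ {i : ℕ},
    t.leafList.count i ≤ 1 → t.siblingIdx i = t'.siblingIdx i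
  | .leaf x, .leaf y, h, i, _ => by cases h; rfl
  | .node l r, .node l' r', h, i, hcount => by
    have hc : l.leafList.count i + r.leafList.count i ≤ 1 := by
      simpa [leafList_node, List.count_append] using hcount
    rcases h with ⟨h1, h2⟩ | ⟨h1, h2⟩
    · rw [siblingIdx_node, siblingIdx_node]
      by_cases hl : l = .leaf i
      · rw [if_pos hl, if_pos ((mequiv_leaf_iff h1).1 hl), mequiv_idx h2]
      · rw [if_neg hl, if_neg (fun hh => hl ((mequiv_leaf_iff h1).2 hh))]
        by_cases hrr : r = .leaf i
        · rw [if_pos hrr, if_pos ((mequiv_leaf_iff h2).1 hrr), mequiv_idx h1]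
        · rw [if_neg hrr, if_neg (fun hh => hrr ((mequiv_leaf_iff h2).2 hh))]
          rw [mequiv_siblingIdx h1 (le_trans (Nat.le_add_right _ _) hc),
              mequiv_siblingIdx h2 (le_trans (Nat.le_add_left _ _) hc)]
    · rw [siblingIdx_node, siblingIdx_node]
      by_cases hl : l = .leaf i
      · have hil : i ∈ l.leafList := by rw [hl]; simp [leafList]
        have hir : i ∉ r.leafList := by
          intro hir
          have : 1 ≤ l.leafList.count i := List.one_le_count_iff.2 hil
          have : 1 ≤ r.leafList.count i := List.one_le_count_iff.2 hir
          omega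
        have hl' : l' ≠ .leaf i := by
          intro hh
          exact hir ((mequiv_perm h2).mem_iff.2 (by rw [hh]; simp [leafList]))
        have hr' : r' = .leaf i := (mequiv_leaf_iff h1).1 hl
        rw [if_pos hl, if_neg hl', if_pos hr', mequiv_idx h2]
      · rw [if_neg hl]
        by_cases hrr : r = .leaf i
        · have hir : i ∈ r.leafList := by rw [hrr]; simp [leafList]
          have hil : i ∉ l.leafList := by
            intro h3
            have : 1 ≤ l.leafList.count i := List.one_le_count_iff.2 h3
            have : 1 ≤ r.leafList.count i := List.one_le_count_iff.2 hir
            omega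
          have hl' : l' = .leaf i := (mequiv_leaf_iff h2).1 hrr
          rw [if_pos hrr, if_pos hl', mequiv_idx h1]
        · have hl' : l' ≠ .leaf i := fun hh => hrr ((mequiv_leaf_iff h2).2 hh)
          have hr' : r' ≠ .leaf i := fun hh => hl ((mequiv_leaf_iff h1).2 hh)
          rw [if_neg hrr, if_neg hl', if_neg hr']
          rw [mequiv_siblingIdx h1 (le_trans (Nat.le_add_right _ _) hc),
              mequiv_siblingIdx h2 (le_trans (Nat.le_add_left _ _) hc)]
          by_cases hil : i ∈ l.leafList
          · have hir : i ∉ r.leafList := by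
              intro hir
              have : 1 ≤ l.leafList.count i := List.one_le_count_iff.2 hil
              have : 1 ≤ r.leafList.count i := List.one_le_count_iff.2 hir
              omega
            have hil' : i ∉ l'.leafList := fun hh => hir ((mequiv_perm h2).mem_iff.2 hh)
            rw [siblingIdx_eq_none hil']
            cases hv : r'.siblingIdx i <;> simp [hv, Option.orElse]
          · have hir' : i ∉ r'.leafList := fun hh => hil ((mequiv_perm h1).mem_iff.2 hh)
            rw [siblingIdx_eq_none hir']
            cases hv : l'.siblingIdx i <;> simp [hv, Option.orElse]
  | .leaf _, .node _ _, h, _, _ => h.elim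
  | .node _ _, .leaf _, h, _, _ => h.elim

/-! ### Clusters determine the tree up to mirror-equivalence -/

lemma clusters_node (l r : BTree) :
    (BTree.node l r).clusters
      = insert {y | y ∈ (BTree.node l r).leafList} (l.clusters ∪ r.clusters) := rfl

lemma mem_clusters_nonempty : ∀ {t : BTree} {C : Set ℕ}, C ∈ t.clusters → C.Nonempty
  | .leaf x, C, h => by
    rw [show (BTree.leaf x).clusters = {{x}} from rfl] at h
    rw [Set.mem_singleton_iff.1 h]; exact ⟨x, rfl⟩
  | .node l r, C, h => by
    rcases h with h | h | h
    · refine ⟨(BTree.node l r).leafList.head (leafList_ne_nil _), ?_⟩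
      rw [h]; exact Set.mem_setOf.2 (List.head_mem _)
    · exact mem_clusters_nonempty h
    · exact mem_clusters_nonempty h

lemma mem_clusters_subset : ∀ {t : BTree} {C : Set ℕ}, C ∈ t.clusters →
    ∀ x ∈ C, x ∈ t.leafList
  | .leaf x, C, h => by
    rw [show (BTree.leaf x).clusters = {{x}} from rfl] at h
    rw [Set.mem_singleton_iff.1 h]
    intro z hz; simp [leafList, Set.mem_singleton_iff.1 hz]
  | .node l r, C, h => by
    rcases h with h | h | h
    · intro z hz; rw [h] at hz; exact hz
    · intro z hz
      simp only [leafList_node, List.mem_append]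
      exact Or.inl (mem_clusters_subset h z hz)
    · intro z hz
      simp only [leafList_node, List.mem_append]
      exact Or.inr (mem_clusters_subset h z hz)

lemma top_mem_clusters : ∀ t : BTree, {y | y ∈ t.leafList} ∈ t.clusters
  | .leaf x => by
    rw [show (BTree.leaf x).clusters = {{x}} from rfl]
    rw [Set.mem_singleton_iff]
    ext z; simp [leafList]
  | .node l r => Set.mem_insert _ _

lemma exists_mem_leafList (t : BTree) : ∃ a, a ∈ t.leafList :=
  List.exists_mem_of_ne_nil _ (leafList_ne_nil t)

lemma nodup_node_disj {l r : BTree} (h : (BTree.node l r).leafList.Nodup) :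
    ∀ z, z ∈ l.leafList → z ∈ r.leafList → False := by
  rw [leafList_node, List.nodup_append] at h
  exact fun z h1 h2 => h.2.2 z h1 z h2 rfl

/-- helper: if the clusters of `c` sit inside those of `node l' r'` and `c` has
the same leaves as `l'`, then the clusters of `c` are clusters of `l'`. -/
lemma clusters_side_left {c l' r' : BTree}
    (hnod' : (BTree.node l' r').leafList.Nodup)
    (h1 : c.clusters ⊆ (BTree.node l' r').clusters)
    (hset : ∀ z, z ∈ c.leafList ↔ z ∈ l'.leafList) :
    c.clusters ⊆ l'.clusters := by
  intro C hC
  rcases h1 hC with h | h | h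
  · exfalso
    obtain ⟨b, hb⟩ := exists_mem_leafList r'
    have hbC : b ∈ C := by rw [h]; simp [leafList_node, hb]
    have : b ∈ l'.leafList := (hset b).1 (mem_clusters_subset hC b hbC)
    exact nodup_node_disj hnod' b this hb
  · exact h
  · exfalso
    obtain ⟨z, hz⟩ := mem_clusters_nonempty hC
    have h1' : z ∈ l'.leafList := (hset z).1 (mem_clusters_subset hC z hz)
    have h2' : z ∈ r'.leafList := mem_clusters_subset h z hz
    exact nodup_node_disj hnod' z h1' h2'

lemma clusters_side_right {c l' r' : BTree}
    (hnod' : (BTree.node l' r').leafList.Nodup)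
    (h1 : c.clusters ⊆ (BTree.node l' r').clusters)
    (hset : ∀ z, z ∈ c.leafList ↔ z ∈ r'.leafList) :
    c.clusters ⊆ r'.clusters := by
  intro C hC
  rcases h1 hC with h | h | h
  · exfalso
    obtain ⟨b, hb⟩ := exists_mem_leafList l'
    have hbC : b ∈ C := by rw [h]; simp [leafList_node, hb]
    have : b ∈ r'.leafList := (hset b).1 (mem_clusters_subset hC b hbC)
    exact nodup_node_disj hnod' b hb this
  · exfalso
    obtain ⟨z, hz⟩ := mem_clusters_nonempty hC
    have h1' : z ∈ r'.leafList := (hset z).1 (mem_clusters_subset hC z hz)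
    have h2' : z ∈ l'.leafList := mem_clusters_subset h z hz
    exact nodup_node_disj hnod' z h2' h1'
  · exact h

lemma clusters_eq_mequiv : ∀ {t t' : BTree}, t.leafList.Nodup → t'.leafList.Nodup →
    t.clusters = t'.clusters → MEquiv t t'
  | .leaf x, .leaf y, _, _, h => by
    rw [show (BTree.leaf x).clusters = {{x}} from rfl,
        show (BTree.leaf y).clusters = {{y}} from rfl] at h
    have : ({x} : Set ℕ) = {y} := Set.singleton_eq_singleton_iff.1 h
    have := Set.singleton_eq_singleton_iff.1 this
    exact this
  | .leaf x, .node l' r', hnod, hnod', h => by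
    exfalso
    have htop := top_mem_clusters (BTree.node l' r')
    rw [← h, show (BTree.leaf x).clusters = {{x}} from rfl, Set.mem_singleton_iff] at htop
    obtain ⟨a, ha⟩ := exists_mem_leafList l'
    obtain ⟨b, hb⟩ := exists_mem_leafList r'
    have ha' : a ∈ ({x} : Set ℕ) := by rw [← htop]; simp [leafList_node, ha]
    have hb' : b ∈ ({x} : Set ℕ) := by rw [← htop]; simp [leafList_node, hb]
    rw [Set.mem_singleton_iff] at ha' hb'
    exact nodup_node_disj hnod' a ha (ha' ▸ hb' ▸ hb)
  | .node l r, .leaf y, hnod, hnod', h => by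
    exfalso
    have htop := top_mem_clusters (BTree.node l r)
    rw [h, show (BTree.leaf y).clusters = {{y}} from rfl, Set.mem_singleton_iff] at htop
    obtain ⟨a, ha⟩ := exists_mem_leafList l
    obtain ⟨b, hb⟩ := exists_mem_leafList r
    have ha' : a ∈ ({y} : Set ℕ) := by rw [← htop]; simp [leafList_node, ha]
    have hb' : b ∈ ({y} : Set ℕ) := by rw [← htop]; simp [leafList_node, hb]
    rw [Set.mem_singleton_iff] at ha' hb'
    exact nodup_node_disj hnod a ha (ha' ▸ hb' ▸ hb)
  | .node l r, .node l' r', hnod, hnod', h => by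
    -- the two trees have the same leaves
    have hsub : ∀ z, z ∈ (BTree.node l r).leafList ↔ z ∈ (BTree.node l' r').leafList := by
      intro z
      constructor
      · intro hz
        exact mem_clusters_subset (h ▸ top_mem_clusters (BTree.node l r)) z
          (Set.mem_setOf.2 hz)
      · intro hz
        exact mem_clusters_subset (h.symm ▸ top_mem_clusters (BTree.node l' r')) z
          (Set.mem_setOf.2 hz)
    have hnl : l.leafList.Nodup := by
      rw [leafList_node, List.nodup_append] at hnod; exact hnod.1
    have hnr : r.leafList.Nodup := by
      rw [leafList_node, List.nodup_append] at hnod; exact hnod.2.1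
    have hnl' : l'.leafList.Nodup := by
      rw [leafList_node, List.nodup_append] at hnod'; exact hnod'.1
    have hnr' : r'.leafList.Nodup := by
      rw [leafList_node, List.nodup_append] at hnod'; exact hnod'.2.1
    -- where does the left cluster of t go?
    have hLl : {y | y ∈ l.leafList} ∈ (BTree.node l' r').clusters := by
      rw [← h, clusters_node]
      exact Set.mem_insert_of_mem _ (Or.inl (top_mem_clusters l))
    rcases hLl with hLl | hLl | hLl
    · -- left cluster of t equals the full leaf set of t' : impossible
      exfalso
      obtain ⟨b, hb⟩ := exists_mem_leafList r
      have : b ∈ {y | y ∈ l.leafList} := by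
        rw [hLl]
        exact Set.mem_setOf.2 ((hsub b).1 (by simp [leafList_node, hb]))
      exact nodup_node_disj hnod b this hb
    · -- aligned case : leaves of l are among leaves of l'
      have hll' : ∀ z, z ∈ l.leafList → z ∈ l'.leafList :=
        fun z hz => mem_clusters_subset hLl z hz
      -- leaves of l' are among leaves of l
      have hLl' : {y | y ∈ l'.leafList} ∈ (BTree.node l r).clusters := by
        rw [h, clusters_node]
        exact Set.mem_insert_of_mem _ (Or.inl (top_mem_clusters l'))
      have hset : ∀ z, z ∈ l.leafList ↔ z ∈ l'.leafList := by
        rcases hLl' with hE | hE | hE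
        · exfalso
          obtain ⟨b, hb⟩ := exists_mem_leafList r'
          have : b ∈ {y | y ∈ l'.leafList} := by
            rw [hE]
            exact Set.mem_setOf.2 ((hsub b).2 (by simp [leafList_node, hb]))
          exact nodup_node_disj hnod' b this hb
        · exact fun z => ⟨hll' z, fun hz => mem_clusters_subset hE z hz⟩
        · exfalso
          obtain ⟨a, ha⟩ := exists_mem_leafList l
          have h1' : a ∈ l'.leafList := hll' a ha
          have h2' : a ∈ r.leafList := mem_clusters_subset hE a (Set.mem_setOf.2 h1')
          exact nodup_node_disj hnod a ha h2'
      have hsetr : ∀ z, z ∈ r.leafList ↔ z ∈ r'.leafList := by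
        intro z
        constructor
        · intro hz
          have hz' : z ∈ (BTree.node l' r').leafList := (hsub z).1 (by simp [leafList_node, hz])
          rw [leafList_node, List.mem_append] at hz'
          rcases hz' with hz' | hz'
          · exact absurd ((hset z).2 hz') (fun hl0 => nodup_node_disj hnod z hl0 hz)
          · exact hz'
        · intro hz
          have hz' : z ∈ (BTree.node l r).leafList := (hsub z).2 (by simp [leafList_node, hz])
          rw [leafList_node, List.mem_append] at hz'
          rcases hz' with hz' | hz'
          · exact absurd ((hset z).1 hz') (fun hl0 => nodup_node_disj hnod' z hl0 hz)
          · exact hz'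
      have hcl : l.clusters = l'.clusters := by
        apply Set.Subset.antisymm
        · exact clusters_side_left hnod'
            (by rw [← h, clusters_node]; exact fun C hC => Set.mem_insert_of_mem _ (Or.inl hC))
            hset
        · exact clusters_side_left hnod
            (by rw [h, clusters_node]; exact fun C hC => Set.mem_insert_of_mem _ (Or.inl hC))
            (fun z => (hset z).symm)
      have hcr : r.clusters = r'.clusters := by
        apply Set.Subset.antisymm
        · exact clusters_side_right hnod'
            (by rw [← h, clusters_node]; exact fun C hC => Set.mem_insert_of_mem _ (Or.inr hC))
            hsetr
        · exact clusters_side_right hnod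
            (by rw [h, clusters_node]; exact fun C hC => Set.mem_insert_of_mem _ (Or.inr hC))
            (fun z => (hsetr z).symm)
      exact Or.inl ⟨clusters_eq_mequiv hnl hnl' hcl, clusters_eq_mequiv hnr hnr' hcr⟩
    · -- swapped case : leaves of l are among leaves of r'
      have hll' : ∀ z, z ∈ l.leafList → z ∈ r'.leafList :=
        fun z hz => mem_clusters_subset hLl z hz
      have hLr' : {y | y ∈ r'.leafList} ∈ (BTree.node l r).clusters := by
        rw [h, clusters_node]
        exact Set.mem_insert_of_mem _ (Or.inr (top_mem_clusters r'))
      have hset : ∀ z, z ∈ l.leafList ↔ z ∈ r'.leafList := by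
        rcases hLr' with hE | hE | hE
        · exfalso
          obtain ⟨b, hb⟩ := exists_mem_leafList l'
          have : b ∈ {y | y ∈ r'.leafList} := by
            rw [hE]
            exact Set.mem_setOf.2 ((hsub b).2 (by simp [leafList_node, hb]))
          exact nodup_node_disj hnod' b hb this
        · exact fun z => ⟨hll' z, fun hz => mem_clusters_subset hE z hz⟩
        · exfalso
          obtain ⟨a, ha⟩ := exists_mem_leafList l
          have h1' : a ∈ r'.leafList := hll' a ha
          have h2' : a ∈ r.leafList := mem_clusters_subset hE a (Set.mem_setOf.2 h1')
          exact nodup_node_disj hnod a ha h2'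
      have hsetr : ∀ z, z ∈ r.leafList ↔ z ∈ l'.leafList := by
        intro z
        constructor
        · intro hz
          have hz' : z ∈ (BTree.node l' r').leafList := (hsub z).1 (by simp [leafList_node, hz])
          rw [leafList_node, List.mem_append] at hz'
          rcases hz' with hz' | hz'
          · exact hz'
          · exact absurd ((hset z).2 hz') (fun hl0 => nodup_node_disj hnod z hl0 hz)
        · intro hz
          have hz' : z ∈ (BTree.node l r).leafList := (hsub z).2 (by simp [leafList_node, hz])
          rw [leafList_node, List.mem_append] at hz'
          rcases hz' with hz' | hz'
          · exact absurd ((hset z).1 hz')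
              (fun hl0 => nodup_node_disj hnod' z hz hl0)
          · exact hz'
      have hcl : l.clusters = r'.clusters := by
        apply Set.Subset.antisymm
        · exact clusters_side_right hnod'
            (by rw [← h, clusters_node]; exact fun C hC => Set.mem_insert_of_mem _ (Or.inl hC))
            hset
        · exact clusters_side_left hnod
            (by rw [h, clusters_node]; exact fun C hC => Set.mem_insert_of_mem _ (Or.inr hC))
            (fun z => (hset z).symm)
      have hcr : r.clusters = l'.clusters := by
        apply Set.Subset.antisymm
        · exact clusters_side_left hnod'
            (by rw [← h, clusters_node]; exact fun C hC => Set.mem_insert_of_mem _ (Or.inr hC))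
            hsetr
        · exact clusters_side_right hnod
            (by rw [h, clusters_node]; exact fun C hC => Set.mem_insert_of_mem _ (Or.inl hC))
            (fun z => (hsetr z).symm)
      exact Or.inr ⟨clusters_eq_mequiv hnl hnr' hcl, clusters_eq_mequiv hnr hnl' hcr⟩

/-! ### Relabelling lemmas -/

lemma leafList_relabel (f : ℕ → ℕ) : ∀ t : BTree, (t.relabel f).leafList = t.leafList.map f
  | .leaf x => rfl
  | .node l r => by
    rw [show (BTree.node l r).relabel f = BTree.node (l.relabel f) (r.relabel f) from rfl,
      leafList_node, leafList_node, leafList_relabel f l, leafList_relabel f r, List.map_append]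

lemma leafSet_relabel (f : ℕ → ℕ) (t : BTree) : (t.relabel f).leafSet = t.leafSet.image f := by
  ext z; simp [leafSet, leafList_relabel]

lemma restrictTo_relabel (σ : ℕ → ℕ) {t : BTree} {S S' : Finset ℕ}
    (h : ∀ z ∈ t.leafList, σ z ∈ S' ↔ z ∈ S) :
    (t.relabel σ).restrictTo S' = Option.map (relabel σ) (t.restrictTo S) := by
  induction t with
  | leaf x =>
    have := h x (by simp [leafList])
    by_cases hx : x ∈ S
    · simp [relabel, restrictTo, hx, this.2 hx]
    · have h2 : σ x ∉ S' := fun hh => hx (this.1 hh)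
      simp [relabel, restrictTo, hx, h2]
  | node l r ihl ihr =>
    have hl := ihl (fun z hz => h z (by simp [leafList_node, hz]))
    have hr := ihr (fun z hz => h z (by simp [leafList_node, hz]))
    rw [show (BTree.node l r).relabel σ = BTree.node (l.relabel σ) (r.relabel σ) from rfl,
      restrictTo_node, restrictTo_node, hl, hr]
    cases l.restrictTo S <;> cases r.restrictTo S <;> rfl

lemma clusters_relabel {σ : ℕ → ℕ} : ∀ t : BTree,
    (t.relabel σ).clusters = (Set.image σ) '' t.clusters
  | .leaf x => by
    rw [show (BTree.leaf x).relabel σ = BTree.leaf (σ x) from rfl,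
      show (BTree.leaf (σ x)).clusters = {{σ x}} from rfl,
      show (BTree.leaf x).clusters = {{x}} from rfl]
    simp
  | .node l r => by
    rw [show (BTree.node l r).relabel σ = BTree.node (l.relabel σ) (r.relabel σ) from rfl,
      clusters_node, clusters_node, Set.image_insert_eq, Set.image_union,
      clusters_relabel l, clusters_relabel r]
    congr 1
    ext z
    simp only [leafList_node, List.mem_append, Set.mem_setOf_eq, Set.mem_image,
      leafList_relabel, List.mem_map]
    constructor
    · rintro (⟨a, ha, rfl⟩ | ⟨a, ha, rfl⟩)
      exacts [⟨a, Or.inl ha, rfl⟩, ⟨a, Or.inr ha, rfl⟩]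
    · rintro ⟨a, ha | ha, rfl⟩
      exacts [Or.inl ⟨a, ha, rfl⟩, Or.inr ⟨a, ha, rfl⟩]

lemma subtreeAt_nil (t : BTree) : t.subtreeAt [] = some t := by cases t <;> rfl

lemma subtreeAt_relabel (σ : ℕ → ℕ) : ∀ (t : BTree) (p : List Bool),
    (t.relabel σ).subtreeAt p = Option.map (relabel σ) (t.subtreeAt p)
  | t, [] => by rw [subtreeAt_nil, subtreeAt_nil]; rfl
  | .leaf x, b :: p => rfl
  | .node l r, false :: p => by
    rw [show (BTree.node l r).subtreeAt (false :: p) = l.subtreeAt p from rfl,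
      show ((BTree.node l r).relabel σ).subtreeAt (false :: p)
        = (l.relabel σ).subtreeAt p from rfl]
    exact subtreeAt_relabel σ l p
  | .node l r, true :: p => by
    rw [show (BTree.node l r).subtreeAt (true :: p) = r.subtreeAt p from rfl,
      show ((BTree.node l r).relabel σ).subtreeAt (true :: p)
        = (r.relabel σ).subtreeAt p from rfl]
    exact subtreeAt_relabel σ r p

lemma lcaPos_relabel {σ : ℕ → ℕ} (hσ : Function.Injective σ) : ∀ (t : BTree) (S : Finset ℕ),
    (t.relabel σ).lcaPos (S.image σ) = t.lcaPos S
  | .leaf x, S => rfl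
  | .node l r, S => by
    have himg : ∀ u : BTree, (S.image σ ⊆ (u.relabel σ).leafSet) ↔ S ⊆ u.leafSet := by
      intro u
      rw [leafSet_relabel]
      constructor
      · intro hh z hz
        have := hh (Finset.mem_image_of_mem σ hz)
        obtain ⟨w, hw, hww⟩ := Finset.mem_image.1 this
        rwa [← hσ hww]
      · intro hh
        exact Finset.image_subset_image hh
    rw [show (BTree.node l r).relabel σ = BTree.node (l.relabel σ) (r.relabel σ) from rfl]
    rw [show (BTree.node (l.relabel σ) (r.relabel σ)).lcaPos (S.image σ) =
      (if S.image σ ⊆ (l.relabel σ).leafSet then false :: (l.relabel σ).lcaPos (S.image σ)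
       else if S.image σ ⊆ (r.relabel σ).leafSet then true :: (r.relabel σ).lcaPos (S.image σ)
       else []) from rfl]
    rw [show (BTree.node l r).lcaPos S =
      (if S ⊆ l.leafSet then false :: l.lcaPos S
       else if S ⊆ r.leafSet then true :: r.lcaPos S
       else []) from rfl]
    rw [if_congr (himg l) rfl rfl, if_congr (himg r) rfl rfl,
      lcaPos_relabel hσ l S, lcaPos_relabel hσ r S]

lemma spanNodes_relabel {σ : ℕ → ℕ} (hσ : Function.Injective σ) (t : BTree) (S : Finset ℕ) :
    (t.relabel σ).spanNodes (S.image σ) = t.spanNodes S := by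
  ext p
  simp only [spanNodes, Set.mem_setOf_eq, lcaPos_relabel hσ, subtreeAt_relabel]
  constructor
  · rintro ⟨h1, u, hu, x, hx, hxu⟩
    cases hv : t.subtreeAt p with
    | none => rw [hv] at hu; simp at hu
    | some v =>
      rw [hv] at hu
      simp only [Option.map_some] at hu
      obtain ⟨w, hw, hww⟩ := Finset.mem_image.1 hx
      refine ⟨h1, v, rfl, w, hw, ?_⟩
      obtain rfl := Option.some.inj hu
      rw [leafList_relabel] at hxu
      obtain ⟨z, hz, hzz⟩ := List.mem_map.1 hxu
      rw [← hww] at hzz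
      rwa [← hσ hzz]
  · rintro ⟨h1, u, hu, x, hx, hxu⟩
    refine ⟨h1, u.relabel σ, by rw [hu]; rfl, σ x, Finset.mem_image_of_mem σ hx, ?_⟩
    rw [leafList_relabel]
    exact List.mem_map.2 ⟨x, hxu, rfl⟩

/-! ### Subtree and path lemmas -/

lemma subtreeAt_append : ∀ (t : BTree) (p q : List Bool),
    t.subtreeAt (p ++ q) = (t.subtreeAt p).bind (fun u => u.subtreeAt q)
  | t, [], q => by rw [List.nil_append, subtreeAt_nil]; rfl
  | .leaf x, b :: p, q => rfl
  | .node l r, false :: p, q => subtreeAt_append l p q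
  | .node l r, true :: p, q => subtreeAt_append r p q

lemma leafList_subtreeAt : ∀ {t : BTree} {p : List Bool} {u : BTree},
    t.subtreeAt p = some u → ∀ z ∈ u.leafList, z ∈ t.leafList
  | t, [], u, h => by
    rw [subtreeAt_nil] at h
    injection h with h
    subst h; exact fun z hz => hz
  | .leaf x, b :: p, u, h => by simp [subtreeAt] at h
  | .node l r, false :: p, u, h => fun z hz => by
    have h' : l.subtreeAt p = some u := h
    simp only [leafList_node, List.mem_append]
    exact Or.inl (leafList_subtreeAt h' z hz)
  | .node l r, true :: p, u, h => fun z hz => by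
    have h' : r.subtreeAt p = some u := h
    simp only [leafList_node, List.mem_append]
    exact Or.inr (leafList_subtreeAt h' z hz)

lemma nodup_subtreeAt : ∀ {t : BTree} {p : List Bool} {u : BTree},
    t.subtreeAt p = some u → t.leafList.Nodup → u.leafList.Nodup
  | t, [], u, h, hn => by
    rw [subtreeAt_nil] at h
    injection h with h
    subst h; exact hn
  | .leaf x, b :: p, u, h, hn => by simp [subtreeAt] at h
  | .node l r, false :: p, u, h, hn =>
    nodup_subtreeAt (show l.subtreeAt p = some u from h)
      (by rw [leafList_node, List.nodup_append] at hn; exact hn.1)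
  | .node l r, true :: p, u, h, hn =>
    nodup_subtreeAt (show r.subtreeAt p = some u from h)
      (by rw [leafList_node, List.nodup_append] at hn; exact hn.2.1)

def pathTo : BTree → ℕ → List Bool
  | .leaf _, _ => []
  | .node l r, m => if m ∈ l.leafList then false :: pathTo l m else true :: pathTo r m

lemma prefix_pathTo : ∀ {t : BTree} {p : List Bool} {u : BTree} {m : ℕ},
    t.leafList.Nodup → t.subtreeAt p = some u → m ∈ u.leafList → p <+: t.pathTo m
  | t, [], u, m, _, _, _ => List.nil_prefix
  | .leaf x, b :: p, u, m, _, h, _ => by simp [subtreeAt] at h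
  | .node l r, false :: p, u, m, hn, h, hm => by
    have h' : l.subtreeAt p = some u := h
    have hml : m ∈ l.leafList := leafList_subtreeAt h' m hm
    rw [show (BTree.node l r).pathTo m =
      (if m ∈ l.leafList then false :: l.pathTo m else true :: r.pathTo m) from rfl,
      if_pos hml]
    exact List.cons_prefix_cons.2 ⟨rfl, prefix_pathTo
      (by rw [leafList_node, List.nodup_append] at hn; exact hn.1) h' hm⟩
  | .node l r, true :: p, u, m, hn, h, hm => by
    have h' : r.subtreeAt p = some u := h
    have hmr : m ∈ r.leafList := leafList_subtreeAt h' m hm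
    have hml : m ∉ l.leafList := by
      rw [leafList_node, List.nodup_append] at hn
      exact fun hc => hn.2.2 m hc m hmr rfl
    rw [show (BTree.node l r).pathTo m =
      (if m ∈ l.leafList then false :: l.pathTo m else true :: r.pathTo m) from rfl,
      if_neg hml]
    exact List.cons_prefix_cons.2 ⟨rfl, prefix_pathTo
      (by rw [leafList_node, List.nodup_append] at hn; exact hn.2.1) h' hm⟩

lemma lcaPos_spec : ∀ {t : BTree} {S : Finset ℕ}, (∀ z ∈ S, z ∈ t.leafList) →
    ∃ w, t.subtreeAt (t.lcaPos S) = some w ∧ ∀ z ∈ S, z ∈ w.leafList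
  | .leaf x, S, h => ⟨.leaf x, rfl, h⟩
  | .node l r, S, h => by
    rw [show (BTree.node l r).lcaPos S =
      (if S ⊆ l.leafSet then false :: l.lcaPos S
       else if S ⊆ r.leafSet then true :: r.lcaPos S else []) from rfl]
    by_cases h1 : S ⊆ l.leafSet
    · rw [if_pos h1]
      exact lcaPos_spec (fun z hz => mem_leafSet.1 (h1 hz))
    · rw [if_neg h1]
      by_cases h2 : S ⊆ r.leafSet
      · rw [if_pos h2]
        exact lcaPos_spec (fun z hz => mem_leafSet.1 (h2 hz))
      · rw [if_neg h2]
        exact ⟨.node l r, rfl, h⟩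

/-! ### The key lemma: restriction to B and to A give the same sibling index -/

def HolP (A B : Finset ℕ) (m : ℕ) : BTree → Prop
  | .leaf _ => True
  | .node l r =>
      ((m ∈ l.leafList ∧ ∀ y ∈ l.leafList, y ∈ A → y = m) →
        ∀ z ∈ r.leafList, z ∈ B → z ∈ A) ∧
      ((m ∈ r.leafList ∧ ∀ y ∈ r.leafList, y ∈ A → y = m) →
        ∀ z ∈ l.leafList, z ∈ B → z ∈ A) ∧
      HolP A B m l ∧ HolP A B m r

lemma holP_node {A B : Finset ℕ} {m : ℕ} {l r : BTree} :
    HolP A B m (BTree.node l r) ↔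
      (((m ∈ l.leafList ∧ ∀ y ∈ l.leafList, y ∈ A → y = m) →
        ∀ z ∈ r.leafList, z ∈ B → z ∈ A) ∧
      ((m ∈ r.leafList ∧ ∀ y ∈ r.leafList, y ∈ A → y = m) →
        ∀ z ∈ l.leafList, z ∈ B → z ∈ A) ∧
      HolP A B m l ∧ HolP A B m r) := Iff.rfl

lemma restrictTo_eq_leaf : ∀ {t : BTree} {A : Finset ℕ} {m : ℕ},
    t.leafList.Nodup → m ∈ t.leafList → m ∈ A → (∀ z ∈ t.leafList, z ∈ A → z = m) →
    t.restrictTo A = some (.leaf m)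
  | .leaf x, A, m, _, hm, hmA, _ => by
    simp only [leafList] at hm
    rw [List.mem_singleton] at hm
    subst hm
    simp [restrictTo, hmA]
  | .node l r, A, m, hn, hm, hmA, hsub => by
    have hnl : l.leafList.Nodup := by
      rw [leafList_node, List.nodup_append] at hn; exact hn.1
    have hnr : r.leafList.Nodup := by
      rw [leafList_node, List.nodup_append] at hn; exact hn.2.1
    rw [leafList_node, List.mem_append] at hm
    rcases hm with hm | hm
    · have hrn : r.restrictTo A = none := by
        rw [restrictTo_eq_none]
        intro z hz hzA
        have := hsub z (by simp [leafList_node, hz]) hzA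
        subst this
        exact nodup_node_disj hn z hm hz
      rw [restrictTo_node, restrictTo_eq_leaf hnl hm hmA
        (fun z hz => hsub z (by simp [leafList_node, hz])), hrn]
    · have hln : l.restrictTo A = none := by
        rw [restrictTo_eq_none]
        intro z hz hzA
        have := hsub z (by simp [leafList_node, hz]) hzA
        subst this
        exact nodup_node_disj hn z hz hm
      rw [restrictTo_node, restrictTo_eq_leaf hnr hm hmA
        (fun z hz => hsub z (by simp [leafList_node, hz])), hln]

lemma holp_bleaves : ∀ {t : BTree} {A B : Finset ℕ} {m : ℕ},
    HolP A B m t → t.leafList.Nodup → m ∈ t.leafList →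
    (∀ z ∈ t.leafList, z ∈ A → z = m) → ∀ z ∈ t.leafList, z ∈ B → z = m
  | .leaf x, A, B, m, _, _, hm, _ => by
    simp only [leafList, List.mem_singleton] at *
    intro z hz _
    omega
  | .node l r, A, B, m, hH, hn, hm, hA => by
    obtain ⟨hc1, hc2, hHl, hHr⟩ := hH
    have hnl : l.leafList.Nodup := by
      rw [leafList_node, List.nodup_append] at hn; exact hn.1
    have hnr : r.leafList.Nodup := by
      rw [leafList_node, List.nodup_append] at hn; exact hn.2.1
    rw [leafList_node, List.mem_append] at hm
    intro z hz hzB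
    rw [leafList_node, List.mem_append] at hz
    rcases hm with hm | hm
    · have hAl : ∀ y ∈ l.leafList, y ∈ A → y = m :=
        fun y hy => hA y (by simp [leafList_node, hy])
      rcases hz with hz | hz
      · exact holp_bleaves hHl hnl hm hAl z hz hzB
      · have : z ∈ A := hc1 ⟨hm, hAl⟩ z hz hzB
        exact hA z (by simp [leafList_node, hz]) this
    · have hAr : ∀ y ∈ r.leafList, y ∈ A → y = m :=
        fun y hy => hA y (by simp [leafList_node, hy])
      rcases hz with hz | hz
      · have : z ∈ A := hc2 ⟨hm, hAr⟩ z hz hzB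
        exact hA z (by simp [leafList_node, hz]) this
      · exact holp_bleaves hHr hnr hm hAr z hz hzB

lemma bind_sib_node_left {l r l₁ : BTree} {S : Finset ℕ} {m : ℕ}
    (hlS : l.restrictTo S = some l₁) (hne : l₁ ≠ .leaf m) (hmr : m ∉ r.leafList) :
    ((BTree.node l r).restrictTo S).bind (fun u => u.siblingIdx m) = l₁.siblingIdx m := by
  rw [restrictTo_node, hlS]
  cases hr : r.restrictTo S with
  | none => rfl
  | some r₁ =>
    have hmr₁ : m ∉ r₁.leafList := fun hc => hmr ((mem_restrictTo_leafList hr).1 hc).1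
    have hr₁ : r₁ ≠ .leaf m := by
      rintro rfl; exact hmr₁ (by simp [leafList])
    show (BTree.node l₁ r₁).siblingIdx m = l₁.siblingIdx m
    rw [siblingIdx_node, if_neg hne, if_neg hr₁, siblingIdx_eq_none hmr₁]
    cases l₁.siblingIdx m <;> rfl

lemma bind_sib_node_right {l r r₁ : BTree} {S : Finset ℕ} {m : ℕ}
    (hrS : r.restrictTo S = some r₁) (hne : r₁ ≠ .leaf m) (hml : m ∉ l.leafList) :
    ((BTree.node l r).restrictTo S).bind (fun u => u.siblingIdx m) = r₁.siblingIdx m := by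
  rw [restrictTo_node, hrS]
  cases hl : l.restrictTo S with
  | none => rfl
  | some l₁ =>
    have hml₁ : m ∉ l₁.leafList := fun hc => hml ((mem_restrictTo_leafList hl).1 hc).1
    have hl₁ : l₁ ≠ .leaf m := by
      rintro rfl; exact hml₁ (by simp [leafList])
    show (BTree.node l₁ r₁).siblingIdx m = r₁.siblingIdx m
    rw [siblingIdx_node, if_neg hl₁, if_neg hne, siblingIdx_eq_none hml₁]
    cases r₁.siblingIdx m <;> rfl

lemma key_lemma : ∀ {t : BTree} {A B : Finset ℕ} {m : ℕ},
    t.leafList.Nodup → A ⊆ B → m ∈ t.leafList → m ∈ A →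
    (∃ y, y ∈ A ∧ y ∈ t.leafList ∧ y ≠ m) → HolP A B m t →
    (t.restrictTo B).bind (fun u => u.siblingIdx m)
      = (t.restrictTo A).bind (fun u => u.siblingIdx m)
  | .leaf x, A, B, m, hn, hAB, hm, hmA, hy, hH => by
    exfalso
    obtain ⟨y, _, hyl, hym⟩ := hy
    simp only [leafList, List.mem_singleton] at hm hyl
    omega
  | .node l r, A, B, m, hn, hAB, hm, hmA, hy, hH => by
    obtain ⟨hc1, hc2, hHl, hHr⟩ := hH
    have hnl : l.leafList.Nodup := by
      rw [leafList_node, List.nodup_append] at hn; exact hn.1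
    have hnr : r.leafList.Nodup := by
      rw [leafList_node, List.nodup_append] at hn; exact hn.2.1
    obtain ⟨y, hyA, hyl, hym⟩ := hy
    rw [leafList_node, List.mem_append] at hm
    rcases hm with hm | hm
    · -- m is in the left subtree
      have hmr : m ∉ r.leafList := fun hc => nodup_node_disj hn m hm hc
      by_cases hex : ∃ y', y' ∈ A ∧ y' ∈ l.leafList ∧ y' ≠ m
      · obtain ⟨y', hy'A, hy'l, hy'm⟩ := hex
        have E := key_lemma hnl hAB hm hmA ⟨y', hy'A, hy'l, hy'm⟩ hHl
        obtain ⟨lA, hlA⟩ := restrictTo_isSome hm hmA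
        obtain ⟨lB, hlB⟩ := restrictTo_isSome hm (hAB hmA)
        have hlAne : lA ≠ .leaf m := by
          rintro rfl
          have : y' ∈ BTree.leafList (.leaf m) := (mem_restrictTo_leafList hlA).2 ⟨hy'l, hy'A⟩
          simp only [leafList, List.mem_singleton] at this
          omega
        have hlBne : lB ≠ .leaf m := by
          rintro rfl
          have : y' ∈ BTree.leafList (.leaf m) :=
            (mem_restrictTo_leafList hlB).2 ⟨hy'l, hAB hy'A⟩
          simp only [leafList, List.mem_singleton] at this
          omega
        rw [bind_sib_node_left hlA hlAne hmr, bind_sib_node_left hlB hlBne hmr]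
        rw [hlA, hlB] at E
        simpa using E
      · push_neg at hex
        have hAl : ∀ z ∈ l.leafList, z ∈ A → z = m :=
          fun z hz hzA => hex z hzA hz
        have hBl : ∀ z ∈ l.leafList, z ∈ B → z = m := holp_bleaves hHl hnl hm hAl
        have hlA : l.restrictTo A = some (.leaf m) := restrictTo_eq_leaf hnl hm hmA hAl
        have hlB : l.restrictTo B = some (.leaf m) :=
          restrictTo_eq_leaf hnl hm (hAB hmA) hBl
        have hyr : y ∈ r.leafList := by
          rw [leafList_node, List.mem_append] at hyl
          rcases hyl with hyl | hyl
          · exact absurd (hAl y hyl hyA) hym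
          · exact hyl
        have hriff : ∀ z ∈ r.leafList, z ∈ A ↔ z ∈ B :=
          fun z hz => ⟨fun h => hAB h, fun h => hc1 ⟨hm, hAl⟩ z hz h⟩
        have hrAB : r.restrictTo A = r.restrictTo B := restrictTo_congr hriff
        obtain ⟨rA, hrA⟩ := restrictTo_isSome hyr hyA
        rw [restrictTo_node, restrictTo_node, hlA, hlB, hrA, ← hrAB, hrA]
    · -- m is in the right subtree
      have hml : m ∉ l.leafList := fun hc => nodup_node_disj hn m hc hm
      by_cases hex : ∃ y', y' ∈ A ∧ y' ∈ r.leafList ∧ y' ≠ m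
      · obtain ⟨y', hy'A, hy'l, hy'm⟩ := hex
        have E := key_lemma hnr hAB hm hmA ⟨y', hy'A, hy'l, hy'm⟩ hHr
        obtain ⟨rA, hrA⟩ := restrictTo_isSome hm hmA
        obtain ⟨rB, hrB⟩ := restrictTo_isSome hm (hAB hmA)
        have hrAne : rA ≠ .leaf m := by
          rintro rfl
          have : y' ∈ BTree.leafList (.leaf m) := (mem_restrictTo_leafList hrA).2 ⟨hy'l, hy'A⟩
          simp only [leafList, List.mem_singleton] at this
          omega
        have hrBne : rB ≠ .leaf m := by
          rintro rfl
          have : y' ∈ BTree.leafList (.leaf m) :=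
            (mem_restrictTo_leafList hrB).2 ⟨hy'l, hAB hy'A⟩
          simp only [leafList, List.mem_singleton] at this
          omega
        rw [bind_sib_node_right hrA hrAne hml, bind_sib_node_right hrB hrBne hml]
        rw [hrA, hrB] at E
        simpa using E
      · push_neg at hex
        have hAr : ∀ z ∈ r.leafList, z ∈ A → z = m :=
          fun z hz hzA => hex z hzA hz
        have hBr : ∀ z ∈ r.leafList, z ∈ B → z = m := holp_bleaves hHr hnr hm hAr
        have hrA : r.restrictTo A = some (.leaf m) := restrictTo_eq_leaf hnr hm hmA hAr
        have hrB : r.restrictTo B = some (.leaf m) :=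
          restrictTo_eq_leaf hnr hm (hAB hmA) hBr
        have hyl' : y ∈ l.leafList := by
          rw [leafList_node, List.mem_append] at hyl
          rcases hyl with hyl | hyl
          · exact hyl
          · exact absurd (hAr y hyl hyA) hym
        have hliff : ∀ z ∈ l.leafList, z ∈ A ↔ z ∈ B :=
          fun z hz => ⟨fun h => hAB h, fun h => hc2 ⟨hm, hAr⟩ z hz h⟩
        have hlAB : l.restrictTo A = l.restrictTo B := restrictTo_congr hliff
        obtain ⟨lA, hlA⟩ := restrictTo_isSome hyl' hyA
        have hlAne : lA ≠ .leaf m := by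
          rintro rfl
          have : m ∈ l.leafList := ((mem_restrictTo_leafList hlA).1 (by simp [leafList])).1
          exact hml this
        rw [restrictTo_node, restrictTo_node, hrA, hrB, hlA, ← hlAB, hlA]

/-! ### Deriving `HolP` from the acyclic agreement forest structure -/

lemma holP_of_pos {A B : Finset ℕ} {m : ℕ} : ∀ {t : BTree},
    (∀ (p : List Bool) (l r : BTree), t.subtreeAt p = some (.node l r) →
      ((m ∈ l.leafList ∧ ∀ y ∈ l.leafList, y ∈ A → y = m) →
        ∀ z ∈ r.leafList, z ∈ B → z ∈ A) ∧
      ((m ∈ r.leafList ∧ ∀ y ∈ r.leafList, y ∈ A → y = m) →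
        ∀ z ∈ l.leafList, z ∈ B → z ∈ A)) →
    HolP A B m t
  | .leaf x, _ => trivial
  | .node l r, h =>
    ⟨(h [] l r (subtreeAt_nil _)).1, (h [] l r (subtreeAt_nil _)).2,
      holP_of_pos (fun p a b hp => h (false :: p) a b hp),
      holP_of_pos (fun p a b hp => h (true :: p) a b hp)⟩

section Derivation

variable {ι : Type} {f : ℕ} (ts' : ι → BTree) (n : ℕ) (comp' : Fin f → BTree)

/-- The geometric core: under the AAF hypotheses (in a normalized world where the
leaf ordering is the identity), any leaf `z ≤ m` appearing in a subtree that also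
contains `m` but whose two halves do not jointly contain `m` and the witness `y₀`
must belong to component `i`. -/
lemma span_separation
    (hnodup : ∀ a, (ts' a).leafList.Nodup)
    (hleaf : ∀ a, (ts' a).leafSet = Finset.range n)
    (hcover : Finset.univ.biUnion (fun i => (comp' i).leafSet) = Finset.range n)
    (hspan : ∀ a (i j : Fin f), i ≠ j →
      Disjoint ((ts' a).spanNodes ((comp' i).leafSet)) ((ts' a).spanNodes ((comp' j).leafSet)))
    (htopo : ∀ i j : Fin f,
      (i ≠ j ∧ ∃ a, ((ts' a).lcaPos ((comp' i).leafSet)) <+: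
        ((ts' a).lcaPos ((comp' j).leafSet))) → i < j)
    (horder : ∀ i j : Fin f, i < j →
      ∀ x ∈ (comp' i).leafSet, ∀ y ∈ (comp' j).leafSet, x < y)
    (a : ι) (i : Fin f) (m y₀ : ℕ)
    (hm : m ∈ (comp' i).leafSet) (hy₀ : y₀ ∈ (comp' i).leafSet) (hy₀m : y₀ < m)
    (p : List Bool) (l r : BTree) (hp : (ts' a).subtreeAt p = some (.node l r))
    (hmu : m ∈ (BTree.node l r).leafList)
    (hsplit : ∀ c : BTree, (c = l ∨ c = r) → ¬(m ∈ c.leafList ∧ y₀ ∈ c.leafList))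
    (z : ℕ) (hz : z ∈ (BTree.node l r).leafList) (hzm : z ≠ m) (hzle : z ≤ m)
    (hzn : z ∈ Finset.range n) :
    z ∈ (comp' i).leafSet := by
  set t := ts' a with ht
  have hn : t.leafList.Nodup := hnodup a
  have hLsub : ∀ (k : Fin f), ∀ x ∈ (comp' k).leafSet, x ∈ t.leafList := by
    intro k x hx
    have : x ∈ Finset.univ.biUnion (fun i => (comp' i).leafSet) :=
      Finset.mem_biUnion.2 ⟨k, Finset.mem_univ k, hx⟩
    rw [hcover, ← hleaf a] at this
    exact mem_leafSet.1 this
  by_contra hzi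
  -- find z's component
  have : z ∈ Finset.univ.biUnion (fun i => (comp' i).leafSet) := by rw [hcover]; exact hzn
  obtain ⟨j, -, hzj⟩ := Finset.mem_biUnion.1 this
  have hij : i ≠ j := fun h => hzi (h ▸ hzj)
  have hzlt : z < m := lt_of_le_of_ne hzle hzm
  have hji : j < i := by
    rcases lt_or_gt_of_ne (Ne.symm hij) with h | h
    · exact h
    · exact absurd (horder i j h m hm z hzj) (by omega)
  -- lca positions
  obtain ⟨w, hw, hwL⟩ := lcaPos_spec (hLsub i)
  obtain ⟨wj, hwj, hwjL⟩ := lcaPos_spec (hLsub j)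
  set q := t.lcaPos ((comp' i).leafSet) with hq
  set qj := t.lcaPos ((comp' j).leafSet) with hqj
  -- q is a prefix of p
  have hqp : q <+: p := by
    have h1 : q <+: t.pathTo m := prefix_pathTo hn hw (hwL m hm)
    have h2 : p <+: t.pathTo m := prefix_pathTo hn hp hmu
    rcases List.prefix_or_prefix_of_prefix h1 h2 with h | h
    · exact h
    · obtain ⟨s, hs⟩ := h
      cases s with
      | nil => rw [← hs, List.append_nil]
      | cons d s' =>
        exfalso
        have hsub : t.subtreeAt q = (BTree.node l r).subtreeAt (d :: s') := by
          rw [← hs, subtreeAt_append, hp]; rfl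
        cases d with
        | false =>
          have hsub' : l.subtreeAt s' = some w := hsub ▸ hw
          exact hsplit l (Or.inl rfl)
            ⟨leafList_subtreeAt hsub' m (hwL m hm), leafList_subtreeAt hsub' y₀ (hwL y₀ hy₀)⟩
        | true =>
          have hsub' : r.subtreeAt s' = some w := hsub ▸ hw
          exact hsplit r (Or.inr rfl)
            ⟨leafList_subtreeAt hsub' m (hwL m hm), leafList_subtreeAt hsub' y₀ (hwL y₀ hy₀)⟩
  -- compare qj with p
  have h1 : qj <+: t.pathTo z := prefix_pathTo hn hwj (hwjL z hzj)
  have h2 : p <+: t.pathTo z := prefix_pathTo hn hp hz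
  rcases List.prefix_or_prefix_of_prefix h1 h2 with h | h
  · -- p is a node of both spanning trees : contradiction with node-disjointness
    have hpi : p ∈ t.spanNodes ((comp' i).leafSet) := ⟨hqp, _, hp, m, hm, hmu⟩
    have hpj : p ∈ t.spanNodes ((comp' j).leafSet) := ⟨h, _, hp, z, hzj, hz⟩
    exact Set.disjoint_left.1 (hspan a i j hij) hpi hpj
  · -- the root of span i is above the root of span j : inheritance edge i → j
    have : q <+: qj := hqp.trans h
    exact absurd (htopo i j ⟨hij, a, this⟩) (by omega)

end Derivation

/-! ### The normalized main theorem -/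

theorem main_normalized {ι : Type} {f : ℕ} (ts' : ι → BTree) (n : ℕ) (comp' : Fin f → BTree)
    (hnodup : ∀ a, (ts' a).leafList.Nodup)
    (hleaf : ∀ a, (ts' a).leafSet = Finset.range n)
    (hcover : Finset.univ.biUnion (fun i => (comp' i).leafSet) = Finset.range n)
    (hrest : ∀ a i, ∃ c, (ts' a).restrictTo (comp' i).leafSet = some c ∧
      c.clusters = (comp' i).clusters)
    (hspan : ∀ a (i j : Fin f), i ≠ j →
      Disjoint ((ts' a).spanNodes ((comp' i).leafSet)) ((ts' a).spanNodes ((comp' j).leafSet)))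
    (htopo : ∀ i j : Fin f,
      (i ≠ j ∧ ∃ a, ((ts' a).lcaPos ((comp' i).leafSet)) <+:
        ((ts' a).lcaPos ((comp' j).leafSet))) → i < j)
    (horder : ∀ i j : Fin f, i < j →
      ∀ x ∈ (comp' i).leafSet, ∀ y ∈ (comp' j).leafSet, x < y)
    (i : Fin f) (m : ℕ) (hm : m ∈ (comp' i).leafSet)
    (y₀ : ℕ) (hy₀ : y₀ ∈ (comp' i).leafSet) (hy₀m : y₀ < m)
    (a b : ι) : (ts' a).olaEntry m = (ts' b).olaEntry m := by
  classical
  set L : Finset ℕ := (comp' i).leafSet with hL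
  set A : Finset ℕ := L.filter (· ≤ m) with hA
  set B : Finset ℕ := (Finset.range n).filter (· ≤ m) with hB
  have hLn : L ⊆ Finset.range n := by
    rw [← hcover]
    exact Finset.subset_biUnion_of_mem (fun k => (comp' k).leafSet) (Finset.mem_univ i)
  have hAB : A ⊆ B := by
    intro z hz
    rw [hA, Finset.mem_filter] at hz
    rw [hB, Finset.mem_filter]
    exact ⟨hLn hz.1, hz.2⟩
  have hAL : A ⊆ L := Finset.filter_subset _ _
  have hmA : m ∈ A := Finset.mem_filter.2 ⟨hm, le_refl m⟩
  have hy₀A : y₀ ∈ A := Finset.mem_filter.2 ⟨hy₀, le_of_lt hy₀m⟩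
  have hLsub : ∀ c, ∀ x ∈ L, x ∈ (ts' c).leafList := by
    intro c x hx
    have := hLn hx
    rw [← hleaf c] at this
    exact mem_leafSet.1 this
  -- per-tree reduction to the component restriction
  have step : ∀ c : ι, (ts' c).olaEntry m =
      ((((ts' c).restrictTo L).bind (fun u => u.restrictTo A)).bind
        (fun u => u.siblingIdx m)).getD 0 := by
    intro c
    have h1 : (ts' c).restrictLe m = (ts' c).restrictTo B := by
      apply restrictLe_eq_restrictTo
      intro z hz
      have hzn : z ∈ Finset.range n := by rw [← hleaf c]; exact mem_leafSet.2 hz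
      rw [hB, Finset.mem_filter]
      constructor
      · rintro ⟨-, h⟩; exact h
      · intro h; exact ⟨hzn, h⟩
    have hHolP : HolP A B m (ts' c) := by
      apply holP_of_pos
      intro p l r hp
      have hn' : (BTree.node l r).leafList.Nodup := nodup_subtreeAt hp (hnodup c)
      constructor
      · rintro ⟨hml, hAl⟩ z hzr hzB
        rw [hB, Finset.mem_filter] at hzB
        refine Finset.mem_filter.2 ⟨?_, hzB.2⟩
        refine span_separation ts' n comp' hnodup hleaf hcover hspan htopo horder
          c i m y₀ hm hy₀ hy₀m p l r hp (by simp [leafList_node, hml]) ?_ z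
          (by simp [leafList_node, hzr]) ?_ hzB.2 hzB.1
        · rintro cc (rfl | rfl) ⟨hcm, hcy⟩
          · exact absurd (hAl y₀ hcy hy₀A) (by omega)
          · exact nodup_node_disj hn' m hml hcm
        · intro hc; subst hc; exact nodup_node_disj hn' z hml hzr
      · rintro ⟨hmr, hAr⟩ z hzl hzB
        rw [hB, Finset.mem_filter] at hzB
        refine Finset.mem_filter.2 ⟨?_, hzB.2⟩
        refine span_separation ts' n comp' hnodup hleaf hcover hspan htopo horder
          c i m y₀ hm hy₀ hy₀m p l r hp (by simp [leafList_node, hmr]) ?_ z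
          (by simp [leafList_node, hzl]) ?_ hzB.2 hzB.1
        · rintro cc (rfl | rfl) ⟨hcm, hcy⟩
          · exact nodup_node_disj hn' m hcm hmr
          · exact absurd (hAr y₀ hcy hy₀A) (by omega)
        · intro hc; subst hc; exact nodup_node_disj hn' z hzl hmr
    have h2 := key_lemma (hnodup c) hAB (hLsub c m hm) hmA
      ⟨y₀, hy₀A, hLsub c y₀ hy₀, by omega⟩ hHolP
    show ((((ts' c).restrictLe m).bind (fun u => u.siblingIdx m)).getD 0 : ℤ) = _
    rw [h1, h2, restrictTo_restrictTo hAL]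
  rw [step a, step b]
  -- now compare the two component restrictions
  obtain ⟨ca, hca, hclus_a⟩ := hrest a i
  obtain ⟨cb, hcb, hclus_b⟩ := hrest b i
  rw [hca, hcb,
    show (some ca).bind (fun u => u.restrictTo A) = ca.restrictTo A from rfl,
    show (some cb).bind (fun u => u.restrictTo A) = cb.restrictTo A from rfl]
  have hna : ca.leafList.Nodup := by
    rw [restrictTo_leafList hca]; exact (hnodup a).filter _
  have hnb : cb.leafList.Nodup := by
    rw [restrictTo_leafList hcb]; exact (hnodup b).filter _
  have hme : MEquiv ca cb := clusters_eq_mequiv hna hnb (hclus_a.trans hclus_b.symm)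
  rcases mequiv_restrictTo hme A with ⟨e1, e2⟩ | ⟨u, u', e1, e2, hu⟩
  · rw [e1, e2]
  · rw [e1, e2]
    have hun : u.leafList.Nodup := by
      rw [restrictTo_leafList e1]; exact hna.filter _
    have hcount : u.leafList.count m ≤ 1 := List.nodup_iff_count_le_one.1 hun m
    rw [show (some u).bind (fun v => v.siblingIdx m) = u.siblingIdx m from rfl,
      show (some u').bind (fun v => v.siblingIdx m) = u'.siblingIdx m from rfl,
      mequiv_siblingIdx hu hcount]

end BTree
end OLA

/-! ### Transfer to the original statement -/

open OLA OLA.BTree in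
theorem stmt4_aux {ι : Type} [Fintype ι] [Nonempty ι] (n f : ℕ)
    (ts : ι → BTree) (hts : ∀ a, (ts a).IsPhylo n)
    (comp : Fin f → BTree) (hF : IsAAF ts n comp)
    (σ : Equiv.Perm ℕ) (hσ : IsOrdering σ n)
    (horder : ∀ i j : Fin f, i < j →
      ∀ x ∈ (comp i).leafSet, ∀ y ∈ (comp j).leafSet, σ x < σ y)
    (htopo : ∀ i j : Fin f, inhEdge ts comp i j → i < j) :
    ∀ i : Fin f, ∀ x ∈ (comp i).leafSet,
      (∃ y ∈ (comp i).leafSet, σ y < σ x) →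
      ∀ a b : ι, ola (ts a) σ (σ x) = ola (ts b) σ (σ x) := by
  classical
  intro i x hx hex a b
  obtain ⟨y, hy, hyx⟩ := hex
  obtain ⟨⟨hcnodup, hcdisj, hcover, hrest, hspan⟩, hacyc⟩ := hF
  have hinj : Function.Injective (σ : ℕ → ℕ) := σ.injective
  -- the image of the full leaf set
  have himg : (Finset.range n).image σ = Finset.range n := by
    apply Finset.eq_of_subset_of_card_le
    · intro z hz
      obtain ⟨w, hw, rfl⟩ := Finset.mem_image.1 hz
      exact Finset.mem_range.2 (hσ w (Finset.mem_range.1 hw))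
    · rw [Finset.card_image_of_injective _ hinj]
  -- the relabeled world
  set ts' : ι → BTree := fun a => (ts a).relabel σ with hts'
  set comp' : Fin f → BTree := fun i => (comp i).relabel σ with hcomp'
  have hcleaf : ∀ k, (comp' k).leafSet = (comp k).leafSet.image σ := by
    intro k; rw [hcomp']; exact leafSet_relabel σ _
  have happ : ∀ k (t : BTree), t.restrictTo ((comp k).leafSet) =
      t.restrictTo ((comp k).leafSet) := fun _ _ => rfl
  refine main_normalized ts' n comp'
    (fun c => by rw [hts', leafList_relabel]; exact ((hts c).1).map hinj)
    (fun c => by rw [hts', leafSet_relabel, (hts c).2, himg])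
    ?_ ?_ ?_ ?_ ?_ i (σ x) ?_ (σ y) ?_ hyx a b
  · -- cover
    rw [show (Finset.univ.biUnion fun k => (comp' k).leafSet)
        = Finset.univ.biUnion fun k => ((comp k).leafSet.image σ) from by
      apply Finset.biUnion_congr rfl; intro k _; exact hcleaf k]
    rw [← Finset.biUnion_image, hcover, himg]
  · -- restrictions have the clusters of the components
    intro c k
    obtain ⟨d, hd, hdc⟩ := hrest c k
    refine ⟨d.relabel σ, ?_, ?_⟩
    · rw [hts', hcleaf k]
      rw [restrictTo_relabel σ (S := (comp k).leafSet)]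
      · rw [hd]; rfl
      · intro z hz
        constructor
        · intro hh
          obtain ⟨w, hw, hww⟩ := Finset.mem_image.1 hh
          rwa [← hinj hww]
        · intro hh; exact Finset.mem_image_of_mem σ hh
    · rw [hcomp', clusters_relabel, clusters_relabel, hdc]
  · -- span disjointness
    intro c k1 k2 hk
    rw [hts', hcleaf k1, hcleaf k2, spanNodes_relabel hinj, spanNodes_relabel hinj]
    exact hspan c k1 k2 hk
  · -- topological order
    intro k1 k2 ⟨hk, c, hpre⟩
    refine htopo k1 k2 ⟨hk, c, ?_⟩
    rw [hts', hcleaf k1, hcleaf k2, lcaPos_relabel hinj, lcaPos_relabel hinj] at hpre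
    exact hpre
  · -- leaf ordering
    intro k1 k2 hk x1 hx1 y1 hy1
    rw [hcleaf k1] at hx1
    rw [hcleaf k2] at hy1
    obtain ⟨w1, hw1, rfl⟩ := Finset.mem_image.1 hx1
    obtain ⟨w2, hw2, rfl⟩ := Finset.mem_image.1 hy1
    exact horder k1 k2 hk w1 hw1 w2 hw2
  · rw [hcleaf i]; exact Finset.mem_image_of_mem σ hx
  · rw [hcleaf i]; exact Finset.mem_image_of_mem σ hy
open OLA in
/-- if `σ` lists the leaves of an acyclic agreement forest
component-by-component following a topological ordering of the inheritance
graph, then every non-first leaf of a component has identical OLA entries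
across all trees. -/
theorem stmt4 {ι : Type} [Fintype ι] [Nonempty ι] (n f : ℕ)
    (ts : ι → BTree) (hts : ∀ a, (ts a).IsPhylo n)
    (comp : Fin f → BTree) (hF : IsAAF ts n comp)
    (σ : Equiv.Perm ℕ) (hσ : IsOrdering σ n)
    (horder : ∀ i j : Fin f, i < j →
      ∀ x ∈ (comp i).leafSet, ∀ y ∈ (comp j).leafSet, σ x < σ y)
    (htopo : ∀ i j : Fin f, inhEdge ts comp i j → i < j) :
    ∀ i : Fin f, ∀ x ∈ (comp i).leafSet,
      (∃ y ∈ (comp i).leafSet, σ y < σ x) →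
      ∀ a b : ι, ola (ts a) σ (σ x) = ola (ts b) σ (σ x) := by
  exact stmt4_aux n f ts hts comp hF σ hσ horder htopo
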